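/- Under the same hypotheses (uniform n-step entrance probability α > 0 into the finite set S₁), the matrix Q = M₁₂(I − M₂₂)⁻¹M₂₁ + M₁₁ on the finite set S₁ is a stochastic matrix, where M_{ij} are the blocks of M with respect to the partition S = S₁ ∪ S₂. -/

import Mathlib

-- n-step transition probabilities of a kernel on a countable space.
open Classical in
noncomputable def mpow {S : Type*} (M : S → S → ℝ) : ℕ → S → S → ℝ
  | 0 => fun x y => if x = y then 1 else 0
  | (n + 1) => fun x y => ∑' z, mpow M n x z * M z y

namespace Stmt1Aux

open ENNReal Filter Classical

variable {S : Type*}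

open Classical in
noncomputable def epow (N : S → S → ℝ≥0∞) : ℕ → S → S → ℝ≥0∞
  | 0 => fun x y => if x = y then 1 else 0
  | (n + 1) => fun x y => ∑' z, epow N n x z * N z y

lemma epow_zero (N : S → S → ℝ≥0∞) (x y : S) :
    epow N 0 x y = if x = y then 1 else 0 := by
  simp [epow]

lemma epow_succ (N : S → S → ℝ≥0∞) (k : ℕ) (x y : S) :
    epow N (k + 1) x y = ∑' z, epow N k x z * N z y := rfl

lemma tsum_delta (y : S) (a : ℝ≥0∞) :
    ∑' z : S, (if z = y then a else 0) = a := by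
  rw [tsum_eq_single y (fun z hz => if_neg hz)]
  simp

lemma epow_zero_row (N : S → S → ℝ≥0∞) (x : S) : ∑' y, epow N 0 x y = 1 := by
  have : ∀ y : S, epow N 0 x y = if y = x then (1 : ℝ≥0∞) else 0 := by
    intro y
    rw [epow_zero]
    by_cases h : x = y
    · simp [h]
    · rw [if_neg h, if_neg (fun h' => h h'.symm)]
  rw [tsum_congr this, tsum_delta]

lemma epow_row {N : S → S → ℝ≥0∞} (hN : ∀ x, ∑' y, N x y = 1) (k : ℕ) (x : S) :
    ∑' y, epow N k x y = 1 := by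
  induction k with
  | zero => exact epow_zero_row N x
  | succ k ih =>
    calc ∑' y, epow N (k + 1) x y
        = ∑' y, ∑' z, epow N k x z * N z y := rfl
      _ = ∑' z, ∑' y, epow N k x z * N z y := ENNReal.tsum_comm
      _ = ∑' z, epow N k x z * ∑' y, N z y := by
          exact tsum_congr fun z => ENNReal.tsum_mul_left
      _ = ∑' z, epow N k x z := by simp [hN]
      _ = 1 := ih

lemma epow_mono {N N' : S → S → ℝ≥0∞} (h : ∀ x y, N' x y ≤ N x y) (k : ℕ) :
    ∀ x y, epow N' k x y ≤ epow N k x y := by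
  induction k with
  | zero => intro x y; rw [epow_zero, epow_zero]
  | succ k ih =>
    intro x y
    rw [epow_succ, epow_succ]
    exact ENNReal.tsum_le_tsum fun z => mul_le_mul' (ih x z) (h z y)

lemma epow_le_one {N : S → S → ℝ≥0∞} (hN : ∀ x, ∑' y, N x y = 1) (k : ℕ) (x y : S) :
    epow N k x y ≤ 1 :=
  (ENNReal.le_tsum y).trans (le_of_eq (epow_row hN k x))

lemma epow_add (N : S → S → ℝ≥0∞) (a b : ℕ) (x y : S) :
    epow N (a + b) x y = ∑' z, epow N a x z * epow N b z y := by
  induction b generalizing y with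
  | zero =>
    have : ∀ z : S, epow N a x z * epow N 0 z y = if z = y then epow N a x y else 0 := by
      intro z
      rw [epow_zero]
      by_cases h : z = y
      · simp [h]
      · simp [h]
    rw [Nat.add_zero, tsum_congr this, tsum_delta]
  | succ b ih =>
    calc epow N (a + (b + 1)) x y
        = ∑' w, epow N (a + b) x w * N w y := rfl
      _ = ∑' w, (∑' z, epow N a x z * epow N b z w) * N w y := by
          exact tsum_congr fun w => by rw [ih]
      _ = ∑' w, ∑' z, epow N a x z * epow N b z w * N w y := by
          exact tsum_congr fun w => ENNReal.tsum_mul_right.symm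
      _ = ∑' z, ∑' w, epow N a x z * epow N b z w * N w y := ENNReal.tsum_comm
      _ = ∑' z, epow N a x z * ∑' w, epow N b z w * N w y := by
          refine tsum_congr fun z => ?_
          rw [← ENNReal.tsum_mul_left]
          exact tsum_congr fun w => mul_assoc _ _ _
      _ = ∑' z, epow N a x z * epow N (b + 1) z y := rfl

section Blocks

variable [DecidableEq S] (N : S → S → ℝ≥0∞) (S₁ : Finset S)

noncomputable def N22 : S → S → ℝ≥0∞ :=
  fun z w => if z ∉ S₁ ∧ w ∉ S₁ then N z w else 0

lemma N22_le : ∀ z w, N22 N S₁ z w ≤ N z w := by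
  intro z w
  unfold N22
  split
  · exact le_rfl
  · exact zero_le

lemma N22_row_le_one (hN : ∀ x, ∑' y, N x y = 1) (w : S) :
    ∑' y, N22 N S₁ w y ≤ 1 :=
  (ENNReal.tsum_le_tsum fun y => N22_le N S₁ w y).trans (le_of_eq (hN w))

/-- split a tsum along a finset -/
lemma tsum_split (g : S → ℝ≥0∞) :
    ∑' y, g y = ∑ y ∈ S₁, g y + ∑' y, if y ∈ S₁ then 0 else g y := by
  have h1 : ∀ y : S, g y = (if y ∈ S₁ then g y else 0) + (if y ∈ S₁ then 0 else g y) := by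
    intro y; by_cases h : y ∈ S₁ <;> simp [h]
  rw [tsum_congr h1, ENNReal.tsum_add]
  congr 1
  rw [tsum_eq_sum (s := S₁) (fun b hb => if_neg hb)]
  exact Finset.sum_congr rfl fun y hy => if_pos hy

lemma epow22_vanish_right {w : S} (hw : w ∈ S₁) (l : ℕ) (hl : 1 ≤ l) (z : S) :
    epow (N22 N S₁) l z w = 0 := by
  obtain ⟨m, rfl⟩ := Nat.exists_eq_add_of_le hl
  rw [show 1 + m = m + 1 from Nat.add_comm 1 m, epow_succ]
  have : ∀ v : S, epow (N22 N S₁) m z v * N22 N S₁ v w = 0 := by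
    intro v
    have : N22 N S₁ v w = 0 := by
      unfold N22
      rw [if_neg]
      rintro ⟨-, hw'⟩
      exact hw' hw
    rw [this, mul_zero]
  rw [tsum_congr this]
  simp

lemma epow22_vanish {z w : S} (hz : z ∉ S₁) (hw : w ∈ S₁) (l : ℕ) :
    epow (N22 N S₁) l z w = 0 := by
  cases l with
  | zero =>
    rw [epow_zero, if_neg]
    intro h
    exact hz (h ▸ hw)
  | succ m => exact epow22_vanish_right N S₁ hw (m + 1) (Nat.succ_le_succ (Nat.zero_le m)) z

/-- probability of staying inside S₂ for l steps -/
noncomputable def stay (l : ℕ) (z : S) : ℝ≥0∞ := ∑' w, epow (N22 N S₁) l z w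

/-- probability of hitting S₁ precisely at step l+1 -/
noncomputable def hitp (l : ℕ) (z : S) : ℝ≥0∞ :=
  ∑' w, epow (N22 N S₁) l z w * (if w ∉ S₁ then ∑ y ∈ S₁, N w y else 0)

lemma stay_zero (z : S) : stay N S₁ 0 z = 1 := epow_zero_row _ z

lemma stay_le_one (hN : ∀ x, ∑' y, N x y = 1) (l : ℕ) (z : S) : stay N S₁ l z ≤ 1 :=
  (ENNReal.tsum_le_tsum fun w => epow_mono (N22_le N S₁) l z w).trans
    (le_of_eq (epow_row hN l z))

lemma stay_add (l b : ℕ) (z : S) :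
    stay N S₁ (l + b) z = ∑' w, epow (N22 N S₁) l z w * stay N S₁ b w := by
  unfold stay
  calc ∑' y, epow (N22 N S₁) (l + b) z y
      = ∑' y, ∑' w, epow (N22 N S₁) l z w * epow (N22 N S₁) b w y := by
        exact tsum_congr fun y => epow_add _ l b z y
    _ = ∑' w, ∑' y, epow (N22 N S₁) l z w * epow (N22 N S₁) b w y := ENNReal.tsum_comm
    _ = ∑' w, epow (N22 N S₁) l z w * ∑' y, epow (N22 N S₁) b w y := by
        exact tsum_congr fun w => ENNReal.tsum_mul_left

lemma stay_succ_eq (l : ℕ) (z : S) :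
    stay N S₁ (l + 1) z = ∑' w, epow (N22 N S₁) l z w * ∑' y, N22 N S₁ w y := by
  unfold stay
  calc ∑' y, epow (N22 N S₁) (l + 1) z y
      = ∑' y, ∑' w, epow (N22 N S₁) l z w * N22 N S₁ w y := rfl
    _ = ∑' w, ∑' y, epow (N22 N S₁) l z w * N22 N S₁ w y := ENNReal.tsum_comm
    _ = ∑' w, epow (N22 N S₁) l z w * ∑' y, N22 N S₁ w y := by
        exact tsum_congr fun w => ENNReal.tsum_mul_left

lemma one_step (hN : ∀ x, ∑' y, N x y = 1) {z : S} (hz : z ∉ S₁) (l : ℕ) :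
    hitp N S₁ l z + stay N S₁ (l + 1) z = stay N S₁ l z := by
  rw [stay_succ_eq]
  unfold hitp
  rw [← ENNReal.tsum_add]
  have : ∀ w : S, epow (N22 N S₁) l z w * (if w ∉ S₁ then ∑ y ∈ S₁, N w y else 0) +
      epow (N22 N S₁) l z w * ∑' y, N22 N S₁ w y = epow (N22 N S₁) l z w := by
    intro w
    by_cases hw : w ∈ S₁
    · rw [epow22_vanish N S₁ hz hw]
      simp
    · rw [if_pos hw, ← mul_add]
      have hrow : (∑ y ∈ S₁, N w y) + ∑' y, N22 N S₁ w y = 1 := by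
        have h22 : ∀ y : S, N22 N S₁ w y = if y ∈ S₁ then 0 else N w y := by
          intro y
          unfold N22
          by_cases hy : y ∈ S₁
          · rw [if_pos hy, if_neg]; rintro ⟨-, hy'⟩; exact hy' hy
          · rw [if_neg hy, if_pos ⟨hw, hy⟩]
        rw [tsum_congr h22, ← tsum_split S₁ (N w), hN w]
      rw [hrow, mul_one]
  rw [tsum_congr this]
  rfl

lemma partial_sum (hN : ∀ x, ∑' y, N x y = 1) {z : S} (hz : z ∉ S₁) (L : ℕ) :
    (∑ l ∈ Finset.range L, hitp N S₁ l z) + stay N S₁ L z = 1 := by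
  induction L with
  | zero => simpa using stay_zero N S₁ z
  | succ L ih =>
    rw [Finset.sum_range_succ, add_assoc, one_step N S₁ hN hz L]
    exact ih

lemma stay_antitone (hN : ∀ x, ∑' y, N x y = 1) (z : S) :
    Antitone (fun l => stay N S₁ l z) := by
  refine antitone_nat_of_succ_le fun l => ?_
  rw [stay_succ_eq]
  calc ∑' w, epow (N22 N S₁) l z w * ∑' y, N22 N S₁ w y
      ≤ ∑' w, epow (N22 N S₁) l z w * 1 :=
        ENNReal.tsum_le_tsum fun w => mul_le_mul_right (N22_row_le_one N S₁ hN w) _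
    _ = stay N S₁ l z := by simp [stay]

lemma stay_n_le {n : ℕ} (hn : 1 ≤ n) {α' : ℝ≥0∞} (hN : ∀ x, ∑' y, N x y = 1)
    (hent : ∀ z, α' ≤ ∑ y ∈ S₁, epow N n z y) (z : S) :
    stay N S₁ n z ≤ 1 - α' := by
  have h1 : stay N S₁ n z ≤ ∑' w, if w ∈ S₁ then 0 else epow N n z w := by
    unfold stay
    refine ENNReal.tsum_le_tsum fun w => ?_
    by_cases hw : w ∈ S₁
    · rw [epow22_vanish_right N S₁ hw n hn z, if_pos hw]
    · rw [if_neg hw]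
      exact epow_mono (N22_le N S₁) n z w
  have hsplit : (∑ y ∈ S₁, epow N n z y) + (∑' w, if w ∈ S₁ then 0 else epow N n z w) = 1 := by
    rw [← tsum_split S₁ (epow N n z)]
    exact epow_row hN n z
  have hA : (∑ y ∈ S₁, epow N n z y) ≠ ∞ := by
    refine ne_of_lt (lt_of_le_of_lt ?_ ENNReal.one_lt_top)
    exact (ENNReal.sum_le_tsum S₁).trans (le_of_eq (epow_row hN n z))
  have h2 : (∑' w, if w ∈ S₁ then 0 else epow N n z w) = 1 - ∑ y ∈ S₁, epow N n z y :=
    ENNReal.eq_sub_of_add_eq hA (by rw [add_comm]; exact hsplit)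
  calc stay N S₁ n z ≤ 1 - ∑ y ∈ S₁, epow N n z y := h1.trans (le_of_eq h2)
    _ ≤ 1 - α' := tsub_le_tsub_left (hent z) 1

lemma stay_pow {n : ℕ} (hn : 1 ≤ n) {α' : ℝ≥0∞} (hN : ∀ x, ∑' y, N x y = 1)
    (hent : ∀ z, α' ≤ ∑ y ∈ S₁, epow N n z y) (k : ℕ) (z : S) :
    stay N S₁ (k * n) z ≤ (1 - α') ^ k := by
  induction k generalizing z with
  | zero => simpa using le_of_eq (stay_zero N S₁ z)
  | succ k ih =>
    have : (k + 1) * n = k * n + n := by ring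
    rw [this, stay_add]
    calc ∑' w, epow (N22 N S₁) (k * n) z w * stay N S₁ n w
        ≤ ∑' w, epow (N22 N S₁) (k * n) z w * (1 - α') :=
          ENNReal.tsum_le_tsum fun w =>
            mul_le_mul_right (stay_n_le N S₁ hn hN hent w) _
      _ = stay N S₁ (k * n) z * (1 - α') := ENNReal.tsum_mul_right
      _ ≤ (1 - α') ^ k * (1 - α') := mul_le_mul_left (ih z) _
      _ = (1 - α') ^ (k + 1) := (pow_succ _ _).symm

lemma stay_tendsto {n : ℕ} (hn : 1 ≤ n) {α' : ℝ≥0∞} (hα' : 0 < α')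
    (hN : ∀ x, ∑' y, N x y = 1)
    (hent : ∀ z, α' ≤ ∑ y ∈ S₁, epow N n z y) (z : S) :
    Tendsto (fun L => stay N S₁ L z) atTop (nhds 0) := by
  have hlt : (1 : ℝ≥0∞) - α' < 1 :=
    ENNReal.sub_lt_self ENNReal.one_ne_top one_ne_zero (ne_of_gt hα')
  have hdiv : Tendsto (fun L : ℕ => L / n) atTop atTop :=
    (Filter.map_div_atTop_eq_nat n hn).le
  have hupper : Tendsto (fun L : ℕ => (1 - α') ^ (L / n)) atTop (nhds 0) :=
    (ENNReal.tendsto_pow_atTop_nhds_zero_of_lt_one hlt).comp hdiv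
  refine tendsto_of_tendsto_of_tendsto_of_le_of_le tendsto_const_nhds hupper
    (fun L => zero_le) (fun L => ?_)
  calc stay N S₁ L z ≤ stay N S₁ (L / n * n) z :=
        stay_antitone N S₁ hN z (Nat.div_mul_le_self L n)
    _ ≤ (1 - α') ^ (L / n) := stay_pow N S₁ hn hN hent (L / n) z

lemma hitp_total {n : ℕ} (hn : 1 ≤ n) {α' : ℝ≥0∞} (hα' : 0 < α')
    (hN : ∀ x, ∑' y, N x y = 1)
    (hent : ∀ z, α' ≤ ∑ y ∈ S₁, epow N n z y) {z : S} (hz : z ∉ S₁) :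
    ∑' l, hitp N S₁ l z = 1 := by
  have h1 : ∀ L, ∑ l ∈ Finset.range L, hitp N S₁ l z = 1 - stay N S₁ L z := by
    intro L
    exact ENNReal.eq_sub_of_add_eq
      (ne_of_lt (lt_of_le_of_lt (stay_le_one N S₁ hN L z) ENNReal.one_lt_top))
      (partial_sum N S₁ hN hz L)
  have h2 : Tendsto (fun L => ∑ l ∈ Finset.range L, hitp N S₁ l z) atTop (nhds 1) := by
    rw [show (fun L => ∑ l ∈ Finset.range L, hitp N S₁ l z)
        = fun L => 1 - stay N S₁ L z from funext h1]
    have := ((ENNReal.continuous_sub_left ENNReal.one_ne_top).tendsto 0).comp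
      (stay_tendsto N S₁ hn hα' hN hent z)
    simpa [Function.comp_def] using this
  exact tendsto_nhds_unique (ENNReal.tendsto_nat_tsum _) h2

/-- The main ENNReal identity. -/
lemma key {n : ℕ} (hn : 1 ≤ n) {α' : ℝ≥0∞} (hα' : 0 < α')
    (hN : ∀ x, ∑' y, N x y = 1)
    (hent : ∀ z, α' ≤ ∑ y ∈ S₁, epow N n z y) (x : S) :
    ∑ y ∈ S₁, (N x y + ∑' (l : ℕ), ∑' (z : S), ∑' (w : S),
        (if z ∉ S₁ then N x z else 0) * epow (N22 N S₁) l z w *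
          (if w ∉ S₁ then N w y else 0)) = 1 := by
  rw [Finset.sum_add_distrib]
  have hD : ∑ y ∈ S₁, ∑' (l : ℕ), ∑' (z : S), ∑' (w : S),
      (if z ∉ S₁ then N x z else 0) * epow (N22 N S₁) l z w *
        (if w ∉ S₁ then N w y else 0)
      = ∑' z, (if z ∈ S₁ then 0 else N x z) := by
    rw [← Summable.tsum_finsetSum (fun i _ => ENNReal.summable)]
    have step1 : ∀ l : ℕ, ∑ y ∈ S₁, ∑' (z : S), ∑' (w : S),
        (if z ∉ S₁ then N x z else 0) * epow (N22 N S₁) l z w *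
          (if w ∉ S₁ then N w y else 0)
        = ∑' (z : S), (if z ∉ S₁ then N x z else 0) * hitp N S₁ l z := by
      intro l
      rw [← Summable.tsum_finsetSum (fun i _ => ENNReal.summable)]
      refine tsum_congr fun z => ?_
      rw [← Summable.tsum_finsetSum (fun i _ => ENNReal.summable)]
      unfold hitp
      rw [← ENNReal.tsum_mul_left]
      refine tsum_congr fun w => ?_
      rw [← Finset.mul_sum, ← mul_assoc]
      congr 1
      by_cases hw : w ∈ S₁
      · simp [hw]
      · simp [hw]
    rw [tsum_congr step1, ENNReal.tsum_comm]
    refine tsum_congr fun z => ?_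
    rw [ENNReal.tsum_mul_left]
    by_cases hzS : z ∈ S₁
    · simp [hzS]
    · rw [hitp_total N S₁ hn hα' hN hent hzS, mul_one, if_pos hzS, if_neg hzS]
  rw [hD, ← tsum_split S₁ (N x), hN x]

end Blocks

/-- Bridge lemma: real matrix powers are toReal of ENNReal matrix powers. -/
lemma mpow_toReal {M' : S → S → ℝ} {N' : S → S → ℝ≥0∞} (hM' : ∀ x y, 0 ≤ M' x y)
    (hN' : ∀ x y, N' x y = ENNReal.ofReal (M' x y))
    (hfin : ∀ k x y, epow N' k x y ≠ ∞) (k : ℕ) (x y : S) :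
    mpow M' k x y = (epow N' k x y).toReal := by
  induction k generalizing x y with
  | zero =>
    rw [show mpow M' 0 x y = if x = y then 1 else 0 from rfl, epow_zero]
    by_cases h : x = y
    · rw [if_pos h, if_pos h]; simp
    · rw [if_neg h, if_neg h]; simp
  | succ k ih =>
    rw [show mpow M' (k + 1) x y = ∑' z, mpow M' k x z * M' z y from rfl, epow_succ,
      ENNReal.tsum_toReal_eq
        (fun z => ENNReal.mul_ne_top (hfin k x z) (by rw [hN']; exact ENNReal.ofReal_ne_top))]
    refine tsum_congr fun z => ?_
    rw [ih, ENNReal.toReal_mul, hN', ENNReal.toReal_ofReal (hM' z y)]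

lemma mpow_nonneg {M' : S → S → ℝ} (hM' : ∀ x y, 0 ≤ M' x y) (k : ℕ) (x y : S) :
    0 ≤ mpow M' k x y := by
  induction k generalizing x y with
  | zero =>
    rw [show mpow M' 0 x y = if x = y then 1 else 0 from rfl]
    split <;> norm_num
  | succ k ih =>
    rw [show mpow M' (k + 1) x y = ∑' z, mpow M' k x z * M' z y from rfl]
    exact tsum_nonneg fun z => mul_nonneg (ih x z) (hM' z y)

end Stmt1Aux

open Stmt1Aux ENNReal in
theorem stmt1 {S : Type*} [Countable S] [DecidableEq S]
    (M : S → S → ℝ) (hMpos : ∀ x y, 0 ≤ M x y) (hMrow : ∀ x, ∑' y, M x y = 1)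
    (S₁ : Finset S) (n : ℕ) (hn : 1 ≤ n) (α : ℝ) (hα : 0 < α)
    (hent : ∀ x : S, α ≤ ∑ y ∈ S₁, mpow M n x y)
    -- the block M₂₂ of M on S₂ = S \ S₁
    (M22 : S → S → ℝ) (hM22 : M22 = fun a b => if a ∉ S₁ ∧ b ∉ S₁ then M a b else 0)
    -- Q = M₁₂ (I - M₂₂)⁻¹ M₂₁ + M₁₁, with (I - M₂₂)⁻¹ = ∑_{l ≥ 0} M₂₂^l
    (Q : S → S → ℝ)
    (hQ : ∀ x y, Q x y = M x y +
      ∑' (l : ℕ), ∑' (z : S), ∑' (w : S),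
        (if z ∉ S₁ then M x z else 0) * mpow M22 l z w * (if w ∉ S₁ then M w y else 0)) :
    ∀ x ∈ S₁, (∀ y ∈ S₁, 0 ≤ Q x y) ∧ ∑ y ∈ S₁, Q x y = 1 := by
  subst hM22
  -- basic nonnegativity of M22
  have hM22pos : ∀ x y, 0 ≤ (fun a b => if a ∉ S₁ ∧ b ∉ S₁ then M a b else 0) x y := by
    intro x y
    simp only
    split
    · exact hMpos x y
    · exact le_rfl
  -- the ENNReal version of M
  set N : S → S → ℝ≥0∞ := fun a b => ENNReal.ofReal (M a b) with hNdef
  have hMsum : ∀ x, Summable (M x ·) := by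
    intro x
    by_contra h
    have h1 := hMrow x
    rw [tsum_eq_zero_of_not_summable h] at h1
    norm_num at h1
  have hNrow : ∀ x, ∑' y, N x y = 1 := by
    intro x
    rw [hNdef]
    rw [← ENNReal.ofReal_tsum_of_nonneg (hMpos x) (hMsum x), hMrow x, ENNReal.ofReal_one]
  have hNfin : ∀ k x y, epow N k x y ≠ ∞ := fun k x y =>
    ne_of_lt (lt_of_le_of_lt (epow_le_one hNrow k x y) ENNReal.one_lt_top)
  have hN22fin : ∀ k x y, epow (N22 N S₁) k x y ≠ ∞ := fun k x y =>
    ne_of_lt (lt_of_le_of_lt ((epow_mono (N22_le N S₁) k x y).trans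
      (epow_le_one hNrow k x y)) ENNReal.one_lt_top)
  -- bridge for M and M22
  have hMbridge : ∀ k x y, mpow M k x y = (epow N k x y).toReal :=
    mpow_toReal hMpos (fun x y => rfl) hNfin
  have hM22N22 : ∀ x y, N22 N S₁ x y
      = ENNReal.ofReal ((fun a b => if a ∉ S₁ ∧ b ∉ S₁ then M a b else 0) x y) := by
    intro x y
    unfold N22
    simp only
    split
    · rfl
    · simp
  have hM22bridge : ∀ k x y,
      mpow (fun a b => if a ∉ S₁ ∧ b ∉ S₁ then M a b else 0) k x y
        = (epow (N22 N S₁) k x y).toReal :=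
    mpow_toReal hM22pos hM22N22 hN22fin
  -- entrance hypothesis in ENNReal form
  set α' : ℝ≥0∞ := ENNReal.ofReal α with hα'def
  have hα' : 0 < α' := ENNReal.ofReal_pos.mpr hα
  have hent' : ∀ z, α' ≤ ∑ y ∈ S₁, epow N n z y := by
    intro z
    have h1 := hent z
    have h2 : ∑ y ∈ S₁, mpow M n z y = (∑ y ∈ S₁, epow N n z y).toReal := by
      rw [ENNReal.toReal_sum (fun y _ => hNfin n z y)]
      exact Finset.sum_congr rfl fun y _ => hMbridge n z y
    rw [h2] at h1
    exact ENNReal.ofReal_le_of_le_toReal h1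
  -- the key identity
  have hkey : ∀ x : S, ∑ y ∈ S₁, (N x y + ∑' (l : ℕ), ∑' (z : S), ∑' (w : S),
      (if z ∉ S₁ then N x z else 0) * epow (N22 N S₁) l z w *
        (if w ∉ S₁ then N w y else 0)) = 1 :=
    fun x => key N S₁ hn hα' hNrow hent' x
  -- abbreviations for the ENNReal summands
  set E : S → S → ℝ≥0∞ := fun x y => N x y + ∑' (l : ℕ), ∑' (z : S), ∑' (w : S),
      (if z ∉ S₁ then N x z else 0) * epow (N22 N S₁) l z w *
        (if w ∉ S₁ then N w y else 0) with hEdef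
  have hEfin : ∀ x : S, ∀ y ∈ S₁, E x y ≠ ∞ := by
    intro x y hy
    have h1 : E x y ≤ 1 := by
      rw [← hkey x]
      exact Finset.single_le_sum (fun i _ => zero_le) hy
    exact ne_of_lt (lt_of_le_of_lt h1 ENNReal.one_lt_top)
  -- pointwise finiteness bounds for the conversion
  have hNxle : ∀ x z : S, N x z ≤ 1 := fun x z =>
    (ENNReal.le_tsum z).trans (le_of_eq (hNrow x))
  have hterm_fin : ∀ (x y : S) (l : ℕ) (z w : S),
      (if z ∉ S₁ then N x z else 0) * epow (N22 N S₁) l z w *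
        (if w ∉ S₁ then N w y else 0) ≠ ∞ := by
    intro x y l z w
    exact ENNReal.mul_ne_top (ENNReal.mul_ne_top
      (by split <;> simp [hNdef]) (hN22fin l z w)) (by split <;> simp [hNdef])
  have hw_fin : ∀ (x y : S) (l : ℕ) (z : S),
      (∑' (w : S), (if z ∉ S₁ then N x z else 0) * epow (N22 N S₁) l z w *
        (if w ∉ S₁ then N w y else 0)) ≠ ∞ := by
    intro x y l z
    have h1 : (∑' (w : S), (if z ∉ S₁ then N x z else 0) * epow (N22 N S₁) l z w *
        (if w ∉ S₁ then N w y else 0)) ≤ ∑' (w : S), epow N l z w := by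
      refine ENNReal.tsum_le_tsum fun w => ?_
      calc (if z ∉ S₁ then N x z else 0) * epow (N22 N S₁) l z w *
            (if w ∉ S₁ then N w y else 0)
          ≤ 1 * epow N l z w * 1 := by
            refine mul_le_mul' (mul_le_mul' ?_ (epow_mono (N22_le N S₁) l z w)) ?_
            · split
              · exact hNxle x z
              · exact zero_le
            · split
              · exact hNxle w y
              · exact zero_le
        _ = epow N l z w := by ring
    exact ne_of_lt (lt_of_le_of_lt (h1.trans (le_of_eq (epow_row hNrow l z)))
      ENNReal.one_lt_top)
  have hz_fin : ∀ (x y : S) (l : ℕ),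
      (∑' (z : S), ∑' (w : S), (if z ∉ S₁ then N x z else 0) * epow (N22 N S₁) l z w *
        (if w ∉ S₁ then N w y else 0)) ≠ ∞ := by
    intro x y l
    have h1 : (∑' (z : S), ∑' (w : S), (if z ∉ S₁ then N x z else 0) *
          epow (N22 N S₁) l z w * (if w ∉ S₁ then N w y else 0)) ≤ ∑' (z : S), N x z := by
      refine ENNReal.tsum_le_tsum fun z => ?_
      calc (∑' (w : S), (if z ∉ S₁ then N x z else 0) * epow (N22 N S₁) l z w *
            (if w ∉ S₁ then N w y else 0))
          ≤ ∑' (w : S), N x z * epow (N22 N S₁) l z w * 1 := by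
            refine ENNReal.tsum_le_tsum fun w => ?_
            refine mul_le_mul' (mul_le_mul' ?_ le_rfl) ?_
            · split
              · exact le_rfl
              · exact zero_le
            · split
              · exact hNxle w y
              · exact zero_le
        _ = N x z * ∑' (w : S), epow (N22 N S₁) l z w := by
            simp only [mul_one]
            exact ENNReal.tsum_mul_left
        _ ≤ N x z * 1 := by
            refine mul_le_mul_right ?_ _
            exact (ENNReal.tsum_le_tsum fun w => epow_mono (N22_le N S₁) l z w).trans
              (le_of_eq (epow_row hNrow l z))
        _ = N x z := mul_one _
    exact ne_of_lt (lt_of_le_of_lt (h1.trans (le_of_eq (hNrow x))) ENNReal.one_lt_top)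
  -- Q x y = toReal (E x y) for y ∈ S₁
  have hQE : ∀ x : S, ∀ y ∈ S₁, Q x y = (E x y).toReal := by
    intro x y hy
    rw [hQ x y, hEdef]
    have hDfin : (∑' (l : ℕ), ∑' (z : S), ∑' (w : S),
        (if z ∉ S₁ then N x z else 0) * epow (N22 N S₁) l z w *
          (if w ∉ S₁ then N w y else 0)) ≠ ∞ := by
      intro hcon
      apply hEfin x y hy
      rw [hEdef]
      simp only
      rw [hcon]
      simp
    rw [ENNReal.toReal_add ENNReal.ofReal_ne_top hDfin,
      ENNReal.toReal_ofReal (hMpos x y)]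
    congr 1
    rw [ENNReal.tsum_toReal_eq (fun l => hz_fin x y l)]
    refine tsum_congr fun l => ?_
    rw [ENNReal.tsum_toReal_eq (fun z => hw_fin x y l z)]
    refine tsum_congr fun z => ?_
    rw [ENNReal.tsum_toReal_eq (fun w => hterm_fin x y l z w)]
    refine tsum_congr fun w => ?_
    rw [ENNReal.toReal_mul, ENNReal.toReal_mul, hM22bridge l z w]
    congr 1
    · congr 1
      split
      · exact (ENNReal.toReal_ofReal (hMpos x z)).symm
      · simp
    · split
      · exact (ENNReal.toReal_ofReal (hMpos w y)).symm
      · simp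
  intro x hx
  constructor
  · intro y hy
    rw [hQ x y]
    refine add_nonneg (hMpos x y) ?_
    refine tsum_nonneg fun l => tsum_nonneg fun z => tsum_nonneg fun w => ?_
    refine mul_nonneg (mul_nonneg ?_ (mpow_nonneg hM22pos l z w)) ?_
    · split
      · exact hMpos x z
      · exact le_rfl
    · split
      · exact hMpos w y
      · exact le_rfl
  · calc ∑ y ∈ S₁, Q x y = ∑ y ∈ S₁, (E x y).toReal :=
          Finset.sum_congr rfl fun y hy => hQE x y hy
      _ = (∑ y ∈ S₁, E x y).toReal := (ENNReal.toReal_sum (fun y hy => hEfin x y hy)).symm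
      _ = 1 := by rw [hkey x, ENNReal.toReal_one]
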